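/- Let K be a commutative ring, X and Y commutative monoids, and α : X → Y a monoid homomorphism. The functor α_* on graded K-modules, (α_* M)_y = ⊕_{α(x)=y} M_x, is symmetric monoidal with respect to the graded tensor products: there is a natural isomorphism α_*(M ⊗ N) ≅ α_* M ⊗ α_* N compatible with units and symmetries. -/

import Mathlib

open scoped DirectSum TensorProduct Classical

variable (K : Type) [CommRing K]

section Defs

variable {X Y : Type} [AddCommMonoid X] [AddCommMonoid Y]

/-- Pushforward of an `X`-graded `K`-module along `α : X → Y`:
`(α_* M)_y = ⊕_{α(x) = y} M_x`. -/
abbrev Push (α : X →+ Y) (M : X → Type) [∀ x, AddCommGroup (M x)] [∀ x, Module K (M x)]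
    (y : Y) : Type :=
  ⨁ x : {x : X // α x = y}, M x.1

/-- Pushforward of a degreewise linear map. -/
noncomputable def pushMap (α : X →+ Y) {M N : X → Type}
    [∀ x, AddCommGroup (M x)] [∀ x, Module K (M x)]
    [∀ x, AddCommGroup (N x)] [∀ x, Module K (N x)]
    (f : ∀ x, M x →ₗ[K] N x) (y : Y) : Push K α M y →ₗ[K] Push K α N y :=
  DirectSum.toModule K _ _ fun x =>
    (DirectSum.lof K {x : X // α x = y} (fun x => N x.1) x).comp (f x.1)

/-- The graded tensor product of `X`-graded `K`-modules:
`(M ⊗ N)_z = ⊕_{x + y = z} M_x ⊗[K] N_y`. -/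
abbrev GT (M N : X → Type) [∀ x, AddCommGroup (M x)] [∀ x, Module K (M x)]
    [∀ x, AddCommGroup (N x)] [∀ x, Module K (N x)] (z : X) : Type :=
  ⨁ p : {p : X × X // p.1 + p.2 = z}, (M p.1.1 ⊗[K] N p.1.2)

/-- Degreewise functoriality of the graded tensor product. -/
noncomputable def gtMap {M M' N N' : X → Type}
    [∀ x, AddCommGroup (M x)] [∀ x, Module K (M x)]
    [∀ x, AddCommGroup (M' x)] [∀ x, Module K (M' x)]
    [∀ x, AddCommGroup (N x)] [∀ x, Module K (N x)]
    [∀ x, AddCommGroup (N' x)] [∀ x, Module K (N' x)]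
    (f : ∀ x, M x →ₗ[K] M' x) (g : ∀ x, N x →ₗ[K] N' x) (z : X) :
    GT K M N z →ₗ[K] GT K M' N' z :=
  DirectSum.toModule K _ _ fun p =>
    (DirectSum.lof K {p : X × X // p.1 + p.2 = z} (fun p => M' p.1.1 ⊗[K] N' p.1.2) p).comp
      (TensorProduct.map (f p.1.1) (g p.1.2))

/-- The symmetry (braiding) of the graded tensor product, `a ⊗ b ↦ b ⊗ a`. -/
noncomputable def gtBraid (M N : X → Type)
    [∀ x, AddCommGroup (M x)] [∀ x, Module K (M x)]
    [∀ x, AddCommGroup (N x)] [∀ x, Module K (N x)] (z : X) :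
    GT K M N z →ₗ[K] GT K N M z :=
  DirectSum.toModule K _ _ fun p =>
    (DirectSum.lof K {p : X × X // p.1 + p.2 = z} (fun p => N p.1.1 ⊗[K] M p.1.2)
        ⟨(p.1.2, p.1.1), by rw [add_comm]; exact p.2⟩).comp
      (TensorProduct.comm K (M p.1.1) (N p.1.2)).toLinearMap

/-- The unit of the graded tensor product: `K` in degree `0` and `0` elsewhere. -/
noncomputable def gunit (X : Type) [AddCommMonoid X] (x : X) : Type :=
  ↥(if x = 0 then (⊤ : Submodule K K) else ⊥)

noncomputable instance (X : Type) [AddCommMonoid X] (x : X) :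
    AddCommGroup (gunit K X x) := by unfold gunit; infer_instance

noncomputable instance (X : Type) [AddCommMonoid X] (x : X) :
    Module K (gunit K X x) := by unfold gunit; infer_instance

end Defs

section Aux

variable {X Y : Type} [AddCommMonoid X] [AddCommMonoid Y] (α : X →+ Y)
variable (M N : X → Type) [∀ x, AddCommGroup (M x)] [∀ x, Module K (M x)]
  [∀ x, AddCommGroup (N x)] [∀ x, Module K (N x)]

/-- Forward direction of the monoidal structure map. -/
noncomputable def fwd (y : Y) :
    Push K α (GT K M N) y →ₗ[K] GT K (Push K α M) (Push K α N) y :=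
  DirectSum.toModule K _ _ fun z =>
    DirectSum.toModule K _ _ fun p =>
      (DirectSum.lof K {q : Y × Y // q.1 + q.2 = y}
          (fun q => Push K α M q.1.1 ⊗[K] Push K α N q.1.2)
          ⟨(α p.1.1, α p.1.2), by rw [← map_add, p.2]; exact z.2⟩).comp
        (TensorProduct.map
          (DirectSum.lof K {x : X // α x = α p.1.1} (fun x => M x.1) ⟨p.1.1, rfl⟩)
          (DirectSum.lof K {x : X // α x = α p.1.2} (fun x => N x.1) ⟨p.1.2, rfl⟩))

/-- Backward direction of the monoidal structure map. -/
noncomputable def bwd (y : Y) :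
    GT K (Push K α M) (Push K α N) y →ₗ[K] Push K α (GT K M N) y :=
  DirectSum.toModule K _ _ fun q =>
    (DirectSum.toModule K _ _
        fun ab : {x : X // α x = q.1.1} × {x : X // α x = q.1.2} =>
      (DirectSum.lof K {z : X // α z = y} (fun z => GT K M N z.1)
          ⟨ab.1.1 + ab.2.1, by rw [map_add, ab.1.2, ab.2.2]; exact q.2⟩).comp
        (DirectSum.lof K {p : X × X // p.1 + p.2 = ab.1.1 + ab.2.1}
          (fun p => M p.1.1 ⊗[K] N p.1.2) ⟨(ab.1.1, ab.2.1), rfl⟩)).comp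
      (TensorProduct.directSum K K (fun a : {x : X // α x = q.1.1} => M a.1)
        (fun b : {x : X // α x = q.1.2} => N b.1)).toLinearMap

set_option maxHeartbeats 2000000 in
/-- The monoidal structure isomorphism. -/
noncomputable def pushGT (y : Y) :
    Push K α (GT K M N) y ≃ₗ[K] GT K (Push K α M) (Push K α N) y :=
  LinearEquiv.ofLinear (fwd K α M N y) (bwd K α M N y)
    (by
      apply DirectSum.linearMap_ext; rintro ⟨⟨q1, q2⟩, hq⟩
      apply TensorProduct.ext
      apply DirectSum.linearMap_ext; rintro ⟨a, ha⟩
      apply LinearMap.ext; intro m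
      apply DirectSum.linearMap_ext; rintro ⟨b, hb⟩
      apply LinearMap.ext; intro n
      dsimp only at ha hb
      subst ha; subst hb
      simp only [LinearMap.comp_apply, LinearMap.compr₂_apply, LinearMap.compr₂ₛₗ_apply, TensorProduct.mk_apply,
        LinearMap.id_apply, bwd, fwd, DirectSum.toModule_lof, LinearEquiv.coe_coe,
        TensorProduct.directSum_lof_tmul_lof, TensorProduct.map_tmul])
    (by
      apply DirectSum.linearMap_ext; rintro ⟨z, hz⟩
      apply DirectSum.linearMap_ext; rintro ⟨⟨x1, x2⟩, hp⟩
      apply TensorProduct.ext'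
      intro m n
      dsimp only at hp
      subst hp
      simp only [LinearMap.comp_apply, LinearMap.id_apply, fwd, bwd,
        DirectSum.toModule_lof, LinearEquiv.coe_coe,
        TensorProduct.directSum_lof_tmul_lof, TensorProduct.map_tmul])

/-- A degree where the argument is nonzero has subsingleton unit component. -/
lemma gunit_subsingleton {X : Type} [AddCommMonoid X] (x : X) (hx : x ≠ 0) :
    Subsingleton (gunit K X x) := by
  unfold gunit; rw [if_neg hx]; infer_instance

/-- The unit component in degree `0` is `K`. -/
noncomputable def gunitEquivK {X : Type} [AddCommMonoid X] (x : X) (hx : x = 0) :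
    gunit K X x ≃ₗ[K] K :=
  (LinearEquiv.ofEq (if x = 0 then (⊤ : Submodule K K) else ⊥) ⊤ (if_pos hx)).trans
    Submodule.topEquiv

/-- Compatibility with units. -/
noncomputable def unitEquiv (y : Y) : Push K α (gunit K X) y ≃ₗ[K] gunit K Y y := by
  by_cases hy : y = 0
  · subst hy
    refine LinearEquiv.ofLinear
      (DirectSum.toModule K _ _ fun x =>
        if hx : x.1 = 0 then
          ((gunitEquivK K (0 : Y) rfl).symm.toLinearMap.comp
            (gunitEquivK K x.1 hx).toLinearMap)
        else 0)
      ((DirectSum.lof K {x : X // α x = 0} (fun x => gunit K X x.1)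
          ⟨0, map_zero α⟩).comp
        ((gunitEquivK K (0 : X) rfl).symm.toLinearMap.comp
          (gunitEquivK K (0 : Y) rfl).toLinearMap)) ?_ ?_
    · apply LinearMap.ext; intro c
      simp [DirectSum.toModule_lof]
    · apply DirectSum.linearMap_ext; rintro ⟨x, hαx⟩
      by_cases hx : x = 0
      · subst hx
        apply LinearMap.ext; intro c
        simp [DirectSum.toModule_lof]
      · have := gunit_subsingleton K x hx
        apply LinearMap.ext; intro c
        rw [Subsingleton.elim c 0]
        simp
  · have h1 : Subsingleton (gunit K Y y) := gunit_subsingleton K y hy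
    have h2 : ∀ x : {x : X // α x = y}, Subsingleton (gunit K X x.1) := fun x =>
      gunit_subsingleton K x.1 fun h => hy (by rw [← x.2, h, map_zero])
    have h3 : Subsingleton (Push K α (gunit K X) y) := by
      have : ∀ x : {x : X // α x = y}, Subsingleton (gunit K X x.1) := h2
      infer_instance
    exact LinearEquiv.ofSubsingleton _ _

end Aux

set_option maxHeartbeats 2000000 in
/-- Let `α : X → Y` be a homomorphism of commutative monoids.  The pushforward functor
`α_*` on graded `K`-modules, `(α_* M)_y = ⊕_{α(x)=y} M_x`, is symmetric monoidal for the
graded tensor products: there are natural isomorphisms `α_*(M ⊗ N) ≅ α_* M ⊗ α_* N`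
(natural in `M` and `N`) compatible with the units and the symmetries. -/
theorem pushforward_symmetric_monoidal {X Y : Type} [AddCommMonoid X] [AddCommMonoid Y]
    (α : X →+ Y) :
    ∃ e : ∀ (M N : X → Type) [∀ x, AddCommGroup (M x)] [∀ x, Module K (M x)]
        [∀ x, AddCommGroup (N x)] [∀ x, Module K (N x)] (y : Y),
        Push K α (GT K M N) y ≃ₗ[K] GT K (Push K α M) (Push K α N) y,
      -- naturality in `M` and `N`
      (∀ (M M' N N' : X → Type)
        [∀ x, AddCommGroup (M x)] [∀ x, Module K (M x)]
        [∀ x, AddCommGroup (M' x)] [∀ x, Module K (M' x)]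
        [∀ x, AddCommGroup (N x)] [∀ x, Module K (N x)]
        [∀ x, AddCommGroup (N' x)] [∀ x, Module K (N' x)]
        (f : ∀ x, M x →ₗ[K] M' x) (g : ∀ x, N x →ₗ[K] N' x) (y : Y),
        (gtMap K (pushMap K α f) (pushMap K α g) y).comp (e M N y).toLinearMap
          = (e M' N' y).toLinearMap.comp (pushMap K α (fun z => gtMap K f g z) y)) ∧
      -- compatibility with the symmetries
      (∀ (M N : X → Type)
        [∀ x, AddCommGroup (M x)] [∀ x, Module K (M x)]
        [∀ x, AddCommGroup (N x)] [∀ x, Module K (N x)] (y : Y),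
        (gtBraid K (Push K α M) (Push K α N) y).comp (e M N y).toLinearMap
          = (e N M y).toLinearMap.comp (pushMap K α (fun z => gtBraid K M N z) y)) ∧
      -- compatibility with the units
      (∀ y : Y, Nonempty (Push K α (gunit K X) y ≃ₗ[K] gunit K Y y)) := by
  refine ⟨fun M N _ _ _ _ y => pushGT K α M N y, ?_, ?_, fun y => ⟨unitEquiv K α y⟩⟩
  · intro M M' N N' _ _ _ _ _ _ _ _ f g y
    apply DirectSum.linearMap_ext; rintro ⟨z, hz⟩
    apply DirectSum.linearMap_ext; rintro ⟨⟨x1, x2⟩, hp⟩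
    apply TensorProduct.ext'
    intro m n
    dsimp only at hp
    subst hp
    simp only [LinearMap.comp_apply, LinearEquiv.coe_coe, pushGT,
      LinearEquiv.ofLinear_apply, fwd, pushMap, gtMap,
      DirectSum.toModule_lof, TensorProduct.map_tmul]
  · intro M N _ _ _ _ y
    apply DirectSum.linearMap_ext; rintro ⟨z, hz⟩
    apply DirectSum.linearMap_ext; rintro ⟨⟨x1, x2⟩, hp⟩
    apply TensorProduct.ext'
    intro m n
    dsimp only at hp
    subst hp
    simp only [LinearMap.comp_apply, LinearEquiv.coe_coe, pushGT,
      LinearEquiv.ofLinear_apply, fwd, pushMap, gtBraid,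
      DirectSum.toModule_lof, TensorProduct.map_tmul, TensorProduct.comm_tmul]
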